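/- arXiv:2302.00860 — 2 statements merged into one kernel-verified Lean document; each statement's English description precedes it below -/
import Mathlib

section
/- Let 𝒰 ⊆ ℝ be an interval and 𝒵 ⊆ ℝ, and let 𝒳 ⊆ ℝ^d. Suppose for each a ∈ 𝒳 we have a bijective, differentiable function q_a : 𝒰 → 𝒵 with nowhere-vanishing derivative. If there exists a function c : 𝒵 → ℝ such that for every a ∈ 𝒳 and every z ∈ 𝒵 one has q_a'(q_a⁻¹(z)) = c(z) (i.e., the derivative of q_a evaluated at the preimage of z does not depend on a), then there exist a function r : 𝒳 → ℝ and an invertible differentiable function q such that q_a(u) = q(u + r(a)) for all a ∈ 𝒳 and u ∈ 𝒰. -/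
open Set Filter Topology

/-- A continuous injective function on an `OrdConnected` set of reals is strictly
monotone or strictly antitone. -/
lemma aux_mono_or_anti {f : ℝ → ℝ} {s : Set ℝ} (hs : s.OrdConnected)
    (hc : ContinuousOn f s) (hi : Set.InjOn f s) :
    StrictMonoOn f s ∨ StrictAntiOn f s := by
  by_cases h : ∀ x ∈ s, ∀ y ∈ s, x < y → f x < f y
  · exact Or.inl h
  · push_neg at h
    obtain ⟨x₀, hx₀, y₀, hy₀, hxy₀, hf₀⟩ := h
    right
    intro x hx y hy hxy
    set m := min x x₀ with hm
    set M := max y y₀ with hM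
    have hms : m ∈ s := by
      rcases min_cases x x₀ with ⟨h1, _⟩ | ⟨h1, _⟩ <;> rw [hm, h1] <;> assumption
    have hMs : M ∈ s := by
      rcases max_cases y y₀ with ⟨h1, _⟩ | ⟨h1, _⟩ <;> rw [hM, h1] <;> assumption
    have hsub : Icc m M ⊆ s := hs.out hms hMs
    have hxmem : x ∈ Icc m M := ⟨min_le_left _ _, le_trans hxy.le (le_max_left _ _)⟩
    have hymem : y ∈ Icc m M := ⟨le_trans (min_le_left _ _) hxy.le, le_max_left _ _⟩
    have hx₀mem : x₀ ∈ Icc m M := ⟨min_le_right _ _, le_trans hxy₀.le (le_max_right _ _)⟩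
    have hy₀mem : y₀ ∈ Icc m M := ⟨le_trans (min_le_right _ _) hxy₀.le, le_max_right _ _⟩
    have hmM : m ≤ M := le_trans hxmem.1 hxmem.2
    rcases ContinuousOn.strictMonoOn_of_injOn_Icc' hmM (hc.mono hsub) (hi.mono hsub) with
      hmono | hanti
    · exact absurd (hmono hx₀mem hy₀mem hxy₀) (not_lt.2 hf₀)
    · exact hanti hxmem hymem hxy

/-- The inverse of a strictly monotone bijection between `OrdConnected` sets of reals
is continuous. -/
lemma aux_cont_inv_mono {f g : ℝ → ℝ} {U Z : Set ℝ} (hU : U.OrdConnected)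
    (hZ : Z.OrdConnected) (hmono : StrictMonoOn f U) (hbij : Set.BijOn f U Z)
    (hinv : Set.InvOn g f U Z) : ContinuousOn g Z := by
  haveI := hU
  haveI := hZ
  have hmaps : Set.MapsTo g Z U := by
    intro z hz
    obtain ⟨u, hu, rfl⟩ := hbij.surjOn hz
    rw [hinv.1 hu]; exact hu
  set g' : Z → U := fun z => ⟨g z, hmaps z.2⟩ with hg'
  have hmono' : Monotone g' := by
    intro z₁ z₂ hle
    by_contra hlt
    rw [not_le] at hlt
    have h2 : g z₂ < g z₁ := hlt
    have := hmono (hmaps z₂.2) (hmaps z₁.2) h2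
    rw [hinv.2 z₂.2, hinv.2 z₁.2] at this
    exact absurd (Subtype.coe_le_coe.2 hle) (not_le.2 this)
  have hsurj : Function.Surjective g' := by
    rintro ⟨u, hu⟩
    exact ⟨⟨f u, hbij.mapsTo hu⟩, Subtype.ext (hinv.1 hu)⟩
  have hcont' : Continuous g' := hmono'.continuous_of_surjective hsurj
  rw [continuousOn_iff_continuous_restrict]
  exact continuous_subtype_val.comp hcont'

/-- The inverse of a continuous bijection from an `OrdConnected` set of reals is
continuous. -/
lemma aux_cont_inv {f g : ℝ → ℝ} {U Z : Set ℝ} (hU : U.OrdConnected)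
    (hc : ContinuousOn f U) (hbij : Set.BijOn f U Z) (hinv : Set.InvOn g f U Z) :
    ContinuousOn g Z := by
  have hZ : Z.OrdConnected := by
    have h1 : IsPreconnected U := isPreconnected_iff_ordConnected.mpr hU
    have h2 : IsPreconnected Z := hbij.image_eq ▸ h1.image f hc
    exact isPreconnected_iff_ordConnected.mp h2
  rcases aux_mono_or_anti hU hc hbij.injOn with hmono | hanti
  · exact aux_cont_inv_mono hU hZ hmono hbij hinv
  · -- reduce to the monotone case by negating `f`
    have hZneg : (-Z).OrdConnected := by
      constructor
      intro x hx y hy z hz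
      rw [Set.mem_neg] at hx hy ⊢
      exact hZ.out hy hx ⟨neg_le_neg hz.2, neg_le_neg hz.1⟩
    have hmonoF : StrictMonoOn (fun x => -(f x)) U := fun x hx y hy hxy =>
      neg_lt_neg (hanti hx hy hxy)
    have hnegbij : Set.BijOn (fun z : ℝ => -z) Z (-Z) := by
      refine ⟨fun z hz => by simpa using hz, fun z₁ _ z₂ _ h => by simpa using h, ?_⟩
      intro w hw
      exact ⟨-w, by simpa using hw, by simp⟩
    have hbijF : Set.BijOn (fun x => -(f x)) U (-Z) := hnegbij.comp hbij
    have hinvF : Set.InvOn (fun z => g (-z)) (fun x => -(f x)) U (-Z) := by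
      constructor
      · intro u hu
        simp only [neg_neg]
        exact hinv.1 hu
      · intro w hw
        have hwZ : -w ∈ Z := by simpa using hw
        simp only [hinv.2 hwZ, neg_neg]
    have hG : ContinuousOn (fun z => g (-z)) (-Z) :=
      aux_cont_inv_mono hU hZneg hmonoF hbijF hinvF
    have : ContinuousOn (fun z : ℝ => g (- -z)) Z := by
      apply hG.comp (continuousOn_neg)
      intro z hz
      simpa using hz
    exact this.congr fun z _ => by simp only [neg_neg]

/-- Derivative of the inverse function, within a set. -/
lemma aux_deriv_inv {f g : ℝ → ℝ} {U Z : Set ℝ} (hinv : Set.InvOn g f U Z)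
    (hmaps : Set.MapsTo g Z U) {z f' : ℝ} (hz : z ∈ Z)
    (hgc : ContinuousWithinAt g Z z) (hf : HasDerivWithinAt f f' U (g z)) (hf' : f' ≠ 0) :
    HasDerivWithinAt g f'⁻¹ Z z := by
  rw [hasDerivWithinAt_iff_tendsto_slope] at hf ⊢
  have hinj : Set.InjOn g Z := fun z₁ h₁ z₂ h₂ h => by
    rw [← hinv.2 h₁, ← hinv.2 h₂, h]
  have htend : Tendsto g (𝓝[Z \ {z}] z) (𝓝[U \ {g z}] (g z)) := by
    apply tendsto_nhdsWithin_of_tendsto_nhds_of_eventually_within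
    · exact hgc.tendsto.mono_left (nhdsWithin_mono z diff_subset)
    · filter_upwards [self_mem_nhdsWithin] with y hy
      exact ⟨hmaps hy.1, fun h => hy.2 (hinj hy.1 hz h)⟩
  have h2 := (hf.comp htend).inv₀ hf'
  refine h2.congr' ?_
  filter_upwards [self_mem_nhdsWithin] with y hy
  have h1 : f (g y) = y := hinv.2 hy.1
  have hz1 : f (g z) = z := hinv.2 hz
  show (slope f (g z) (g y))⁻¹ = slope g z y
  rw [slope_def_field, slope_def_field, h1, hz1, inv_div]

/-- **Lemma 1 of the paper, forward direction.**
Let `𝒰 ⊆ ℝ` be an interval (`OrdConnected`), `𝒵 ⊆ ℝ`, `𝒳 ⊆ ℝ^d`.  For each `a ∈ 𝒳`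
we have a bijective differentiable function `q a : 𝒰 → 𝒵` with nowhere-vanishing
derivative `q' a`, and inverse `s a`.  If the derivative of `q a` evaluated at the
preimage of `z` does not depend on `a`, i.e. `q' a (s a z) = c z` for a function `c`,
then all members of the family are horizontal translates of a single invertible
differentiable function `Q`: `q a u = Q (u + r a)`. -/
theorem lemma1_forward {d : ℕ}
    (𝒰 𝒵 : Set ℝ) (hUinterval : 𝒰.OrdConnected)
    (𝒳 : Set (Fin d → ℝ)) (hXne : 𝒳.Nonempty)
    (q : (Fin d → ℝ) → ℝ → ℝ) (q' : (Fin d → ℝ) → ℝ → ℝ)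
    (s : (Fin d → ℝ) → ℝ → ℝ)
    (hbij : ∀ a ∈ 𝒳, Set.BijOn (q a) 𝒰 𝒵)
    (hinv : ∀ a ∈ 𝒳, Set.InvOn (s a) (q a) 𝒰 𝒵)
    (hderiv : ∀ a ∈ 𝒳, ∀ u ∈ 𝒰, HasDerivWithinAt (q a) (q' a u) 𝒰 u)
    (hderiv_ne : ∀ a ∈ 𝒳, ∀ u ∈ 𝒰, q' a u ≠ 0)
    (c : ℝ → ℝ)
    (hc : ∀ a ∈ 𝒳, ∀ z ∈ 𝒵, q' a (s a z) = c z) :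
    ∃ (r : (Fin d → ℝ) → ℝ) (Q : ℝ → ℝ),
      Set.BijOn Q 𝒰 𝒵 ∧ DifferentiableOn ℝ Q 𝒰 ∧
      ∀ a ∈ 𝒳, ∀ u ∈ 𝒰, q a u = Q (u + r a) := by
  obtain ⟨a₀, ha₀⟩ := hXne
  rcases Set.eq_empty_or_nonempty 𝒰 with hUe | ⟨u₀, hu₀⟩
  · refine ⟨fun _ => 0, q a₀, ?_, ?_, ?_⟩
    · have hZ : 𝒵 = ∅ := by rw [← (hbij a₀ ha₀).image_eq, hUe, Set.image_empty]
      rw [hUe, hZ]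
      exact ⟨fun x hx => absurd hx (Set.notMem_empty x),
        fun x hx => absurd hx (Set.notMem_empty x),
        fun x hx => absurd hx (Set.notMem_empty x)⟩
    · rw [hUe]; exact differentiableOn_empty
    · intro a _ u hu; rw [hUe] at hu; exact absurd hu (Set.notMem_empty u)
  · have hqcont : ∀ a ∈ 𝒳, ContinuousOn (q a) 𝒰 := fun a ha u hu =>
      (hderiv a ha u hu).continuousWithinAt
    have hmapsS : ∀ a ∈ 𝒳, Set.MapsTo (s a) 𝒵 𝒰 := by
      intro a ha z hz
      obtain ⟨u, hu, rfl⟩ := (hbij a ha).surjOn hz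
      rw [(hinv a ha).1 hu]; exact hu
    have hScont : ∀ a ∈ 𝒳, ContinuousOn (s a) 𝒵 := fun a ha =>
      aux_cont_inv hUinterval (hqcont a ha) (hbij a ha) (hinv a ha)
    have hSderiv : ∀ a ∈ 𝒳, ∀ z ∈ 𝒵, HasDerivWithinAt (s a) (c z)⁻¹ 𝒵 z := by
      intro a ha z hz
      have hu : s a z ∈ 𝒰 := hmapsS a ha hz
      have hf := hderiv a ha (s a z) hu
      have hne : q' a (s a z) ≠ 0 := hderiv_ne a ha (s a z) hu
      have := aux_deriv_inv (hinv a ha) (hmapsS a ha) hz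
        ((hScont a ha z hz)) hf hne
      rwa [hc a ha z hz] at this
    set r : (Fin d → ℝ) → ℝ := fun a => s a₀ (q a u₀) - u₀ with hr
    have hconv : Convex ℝ 𝒰 := convex_iff_ordConnected.mpr hUinterval
    have key : ∀ a ∈ 𝒳, ∀ u ∈ 𝒰, s a₀ (q a u) - u = r a := by
      intro a ha
      set φ : ℝ → ℝ := fun u => s a₀ (q a u) - u with hφdef
      have hφ : ∀ u ∈ 𝒰, HasDerivWithinAt φ 0 𝒰 u := by
        intro u hu
        have hzmem : q a u ∈ 𝒵 := (hbij a ha).mapsTo hu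
        have h1 : HasDerivWithinAt (s a₀) (c (q a u))⁻¹ 𝒵 (q a u) :=
          hSderiv a₀ ha₀ _ hzmem
        have h2 := hderiv a ha u hu
        have h3 := h1.comp u h2 (hbij a ha).mapsTo
        have h4 : c (q a u) = q' a u := by
          rw [← hc a ha _ hzmem, (hinv a ha).1 hu]
        have h5 : (c (q a u))⁻¹ * q' a u = 1 := by
          rw [h4]; exact inv_mul_cancel₀ (hderiv_ne a ha u hu)
        rw [h5] at h3
        have h6 := h3.sub (hasDerivWithinAt_id u 𝒰)
        rw [sub_self] at h6
        exact h6
      have hφcont : ContinuousOn φ 𝒰 := fun u hu => (hφ u hu).continuousWithinAt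
      have hφ' : ∀ x ∈ interior 𝒰, HasDerivWithinAt φ ((fun _ => (0 : ℝ)) x) (interior 𝒰) x :=
        fun x hx => (hφ x (interior_subset hx)).mono interior_subset
      have hmono : MonotoneOn φ 𝒰 :=
        monotoneOn_of_hasDerivWithinAt_nonneg hconv hφcont hφ' (fun x _ => le_refl 0)
      have hanti : AntitoneOn φ 𝒰 :=
        antitoneOn_of_hasDerivWithinAt_nonpos hconv hφcont hφ' (fun x _ => le_refl 0)
      intro u hu
      have heq : φ u = φ u₀ := by
        rcases le_total u u₀ with h | h
        · exact le_antisymm (hmono hu hu₀ h) (hanti hu hu₀ h)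
        · exact le_antisymm (hanti hu₀ hu h) (hmono hu₀ hu h)
      simpa [hφdef, hr] using heq
    refine ⟨r, q a₀, hbij a₀ ha₀,
      fun u hu => (hderiv a₀ ha₀ u hu).differentiableWithinAt, ?_⟩
    intro a ha u hu
    have h1 := key a ha u hu
    have h2 : s a₀ (q a u) = u + r a := by linarith
    have h3 : q a₀ (s a₀ (q a u)) = q a u := (hinv a₀ ha₀).2 ((hbij a ha).mapsTo hu)
    rw [← h3, h2]
end

section
/- Let m ≥ 3, 𝒰, 𝒵 ⊆ ℝ^m with 𝒰 open and connected, and 𝒳 ⊆ ℝ^d. Suppose for each a ∈ 𝒳 we have an invertible, differentiable function q_a : 𝒰 → 𝒵, and suppose there exist a nonzero constant c ∈ ℝ and a fixed orthogonal matrix A ∈ ℝ^{m×m} such that the Jacobian satisfies Jq_a(q_a⁻¹(z)) = cA for every a ∈ 𝒳 and every z ∈ 𝒵. Then there exist a function r : 𝒳 → ℝ^m and an invertible function q such that q_a(u) = q(u + r(a)) for all a ∈ 𝒳 and u ∈ 𝒰. -/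
open Set Matrix

private lemma const_on_open_preconnected {m : ℕ}
    {f : (Fin m → ℝ) → (Fin m → ℝ)} {U : Set (Fin m → ℝ)} (hO : IsOpen U) (hC : IsPreconnected U)
    (hd : ∀ x ∈ U, DifferentiableAt ℝ f x)
    (h0 : ∀ x ∈ U, fderiv ℝ f x = 0) :
    ∀ x ∈ U, ∀ y ∈ U, f x = f y := by
  intro x hx y hy
  haveI : PreconnectedSpace U := Subtype.preconnectedSpace hC
  have hloc : IsLocallyConstant (fun z : U => f z.1) := by
    rw [IsLocallyConstant.iff_exists_open]
    rintro ⟨z, hz⟩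
    obtain ⟨ε, hε, hball⟩ := Metric.isOpen_iff.mp hO z hz
    refine ⟨Subtype.val ⁻¹' Metric.ball z ε, Metric.isOpen_ball.preimage continuous_subtype_val,
      Metric.mem_ball_self hε, ?_⟩
    rintro ⟨w, hw⟩ hwball
    have key : ∀ p ∈ Metric.ball z ε, ∀ q ∈ Metric.ball z ε, f p = f q := by
      intro p hp q hq
      have := (convex_ball z ε).is_const_of_fderivWithin_eq_zero
        (f := f) (fun a ha => (hd a (hball ha)).differentiableWithinAt)
        (fun a ha => by
          rw [fderivWithin_of_isOpen Metric.isOpen_ball ha]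
          exact h0 a (hball ha)) hp hq
      exact this
    exact key w hwball z (Metric.mem_ball_self hε)
  exact hloc.apply_eq_of_isPreconnected isPreconnected_univ (s := (Set.univ : Set U))
    (x := ⟨x, hx⟩) (y := ⟨y, hy⟩) trivial trivial

/-- **Lemma 2 of the paper** (multivariate translation lemma).
Let `m ≥ 3`, `𝒰, 𝒵 ⊆ ℝ^m` with `𝒰` open and connected, `𝒳 ⊆ ℝ^d`.  For each `a ∈ 𝒳`
we have an invertible differentiable function `q a : 𝒰 → 𝒵` (with inverse `s a`), and
the Jacobian satisfies `Jq_a (q_a⁻¹ z) = c • A` for a fixed nonzero constant `c` and a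
fixed orthogonal linear map `A` (i.e. `A` preserves the dot product).  Then all members
of the family are translates of a single invertible function `Q`:
`q a u = Q (u + r a)`. -/
theorem lemma2_multivariate_translation {m d : ℕ} (hm : 3 ≤ m)
    (𝒰 𝒵 : Set (Fin m → ℝ)) (hUopen : IsOpen 𝒰) (hUconn : IsConnected 𝒰)
    (𝒳 : Set (Fin d → ℝ)) (hXne : 𝒳.Nonempty)
    (q : (Fin d → ℝ) → (Fin m → ℝ) → (Fin m → ℝ))
    (s : (Fin d → ℝ) → (Fin m → ℝ) → (Fin m → ℝ))
    (hbij : ∀ a ∈ 𝒳, Set.BijOn (q a) 𝒰 𝒵)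
    (hinv : ∀ a ∈ 𝒳, Set.InvOn (s a) (q a) 𝒰 𝒵)
    (hdiff : ∀ a ∈ 𝒳, DifferentiableOn ℝ (q a) 𝒰)
    (c : ℝ) (hc : c ≠ 0)
    (A : (Fin m → ℝ) →L[ℝ] (Fin m → ℝ))
    (hA_orth : ∀ v w : Fin m → ℝ, (A v) ⬝ᵥ (A w) = v ⬝ᵥ w)
    (hJac : ∀ a ∈ 𝒳, ∀ z ∈ 𝒵, fderiv ℝ (q a) (s a z) = c • A) :
    ∃ (r : (Fin d → ℝ) → (Fin m → ℝ)) (Q : (Fin m → ℝ) → (Fin m → ℝ)),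
      Set.BijOn Q 𝒰 𝒵 ∧
      ∀ a ∈ 𝒳, ∀ u ∈ 𝒰, q a u = Q (u + r a) := by
  obtain ⟨a₀, ha₀⟩ := hXne
  obtain ⟨u₀, hu₀⟩ := hUconn.nonempty
  -- A is injective, hence surjective
  have hAinj : Function.Injective A := by
    intro v w hvw
    have h1 : (v - w) ⬝ᵥ (v - w) = 0 := by
      have := hA_orth (v - w) (v - w)
      rw [map_sub, hvw, sub_self] at this
      simpa using this.symm
    have h2 : v - w = 0 := by
      funext i
      have hnn : ∀ j, 0 ≤ (v - w) j * (v - w) j := fun j => mul_self_nonneg _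
      have := (Finset.sum_eq_zero_iff_of_nonneg (fun j _ => hnn j)).mp h1 i (Finset.mem_univ i)
      exact mul_self_eq_zero.mp this
    exact sub_eq_zero.mp h2
  have hAsurj : Function.Surjective A :=
    (LinearMap.injective_iff_surjective (f := (A : (Fin m → ℝ) →ₗ[ℝ] (Fin m → ℝ)))).mp (show Function.Injective (A : (Fin m → ℝ) →ₗ[ℝ] (Fin m → ℝ)) from hAinj)
  -- each q a has fderiv c • A on 𝒰
  have hfd : ∀ a ∈ 𝒳, ∀ u ∈ 𝒰, fderiv ℝ (q a) u = c • A := by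
    intro a ha u hu
    have hz : q a u ∈ 𝒵 := (hbij a ha).mapsTo hu
    have := hJac a ha (q a u) hz
    rwa [(hinv a ha).1 hu] at this
  -- q a u - c • A u is constant in u
  have hdiffAt : ∀ a ∈ 𝒳, ∀ u ∈ 𝒰, DifferentiableAt ℝ (q a) u := fun a ha u hu =>
    ((hdiff a ha) u hu).differentiableAt (hUopen.mem_nhds hu)
  have hconst : ∀ a ∈ 𝒳, ∀ u ∈ 𝒰, q a u - c • A u = q a u₀ - c • A u₀ := by
    intro a ha u hu
    have := const_on_open_preconnected (f := fun x => q a x - c • A x) hUopen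
      hUconn.isPreconnected
      (fun x hx => ((hdiffAt a ha x hx).sub ((A.differentiable.const_smul c).differentiableAt)))
      (fun x hx => by
        have h1 : fderiv ℝ (fun y => q a y - c • A y) x
            = fderiv ℝ (q a) x - fderiv ℝ (fun y => c • A y) x :=
          fderiv_sub (hdiffAt a ha x hx) ((A.differentiable.const_smul c).differentiableAt)
        rw [h1, hfd a ha x hx]
        have : fderiv ℝ (fun y => c • A y) x = c • A := by
          have := (c • A).fderiv (x := x)
          exact this
        rw [this, sub_self]) u hu u₀ hu₀
    exact this
  -- translation vector
  set b : (Fin d → ℝ) → (Fin m → ℝ) := fun a => q a u₀ - c • A u₀ with hb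
  set r : (Fin d → ℝ) → (Fin m → ℝ) :=
    fun a => c⁻¹ • Function.surjInv hAsurj (b a - b a₀) with hr
  set Q : (Fin m → ℝ) → (Fin m → ℝ) := fun x => c • A x + b a₀ with hQ
  have hQeq : ∀ u ∈ 𝒰, Q u = q a₀ u := by
    intro u hu
    have := hconst a₀ ha₀ u hu
    simp only [hQ, hb]
    rw [← this]; abel
  refine ⟨r, Q, ?_, ?_⟩
  · exact (hbij a₀ ha₀).congr fun u hu => (hQeq u hu).symm
  · intro a ha u hu
    have hAr : c • A (r a) = b a - b a₀ := by
      show c • A (c⁻¹ • Function.surjInv hAsurj (b a - b a₀)) = b a - b a₀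
      rw [A.map_smul, smul_smul, mul_inv_cancel₀ hc, one_smul]
      exact Function.surjInv_eq hAsurj _
    have hqa : q a u = c • A u + b a := by
      have h := hconst a ha u hu
      show q a u = c • A u + (q a u₀ - c • A u₀)
      rw [← h]; abel
    show q a u = c • A (u + r a) + b a₀
    rw [map_add, smul_add, hAr, hqa]
    abel
end
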